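/- For real χ > 0 and natural number n with 2χ < n and n - j ≥ 1, the sum ∑_{i=1}^{n-j} i·(χ/n)^i·(1 - χ/n)^{n-i} is at least (χ/n)·(1 - χ/n)^{n-1} and at most (1 - χ/n)^n · χ(n-χ)/(n-2χ)^2. -/

import Mathlib

theorem ridge_drift_bounds (χ : ℝ) (n j : ℕ) (hχ : 0 < χ)
    (hn : 2 * χ < n) (hj : 1 ≤ n - j) :
    χ / n * (1 - χ / n) ^ (n - 1) ≤
      ∑ i ∈ Finset.Icc 1 (n - j), (i : ℝ) * (χ / n) ^ i * (1 - χ / n) ^ (n - i) ∧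
    ∑ i ∈ Finset.Icc 1 (n - j), (i : ℝ) * (χ / n) ^ i * (1 - χ / n) ^ (n - i) ≤
      (1 - χ / n) ^ n * (χ * ((n : ℝ) - χ) / ((n : ℝ) - 2 * χ) ^ 2) := by
  have hn0 : (0 : ℝ) < n := lt_trans (by linarith) hn
  have hp0 : 0 < χ / n := div_pos hχ hn0
  have hp1 : χ / n < 1 := by rw [div_lt_one hn0]; linarith
  have hq0 : 0 < 1 - χ / n := by linarith
  have hterm : ∀ i : ℕ, 0 ≤ (i : ℝ) * (χ / n) ^ i * (1 - χ / n) ^ (n - i) := fun i =>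
    mul_nonneg (mul_nonneg (Nat.cast_nonneg i) (pow_nonneg hp0.le i)) (pow_nonneg hq0.le _)
  constructor
  · have h1 : 1 ∈ Finset.Icc 1 (n - j) := Finset.mem_Icc.mpr ⟨le_refl 1, hj⟩
    have := Finset.single_le_sum (f := fun i : ℕ => (i : ℝ) * (χ / n) ^ i * (1 - χ / n) ^ (n - i))
      (fun i _ => hterm i) h1
    simpa using this
  · set p := χ / n with hp
    set q := 1 - χ / n with hqdef
    set r := p / q with hr
    have hr0 : 0 ≤ r := div_nonneg hp0.le hq0.le
    have hr1 : r < 1 := by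
      rw [hr, div_lt_one hq0, hp, hqdef]
      rw [sub_div' (ne_of_gt hn0) ]
      rw [div_lt_div_iff₀ hn0 hn0]
      nlinarith
    have hrn : ‖r‖ < 1 := by rw [Real.norm_eq_abs, abs_of_nonneg hr0]; exact hr1
    have hsum := hasSum_coe_mul_geometric_of_norm_lt_one (𝕜 := ℝ) hrn
    -- rewrite each term
    have hEq : ∀ i ∈ Finset.Icc 1 (n - j),
        (i : ℝ) * p ^ i * q ^ (n - i) = q ^ n * ((i : ℝ) * r ^ i) := by
      intro i hi
      have hin : i ≤ n := le_trans (Finset.mem_Icc.mp hi).2 (Nat.sub_le n j)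
      have hq : q ^ (n - i) = q ^ n / q ^ i := by
        rw [eq_div_iff (pow_ne_zero _ hq0.ne')]
        rw [← pow_add, Nat.sub_add_cancel hin]
      rw [hr, div_pow, hq]
      ring
    rw [Finset.sum_congr rfl hEq, ← Finset.mul_sum]
    have hle : ∑ i ∈ Finset.Icc 1 (n - j), (i : ℝ) * r ^ i ≤ r / (1 - r) ^ 2 := by
      rw [← hsum.tsum_eq]
      exact hsum.summable.sum_le_tsum _ (fun i _ => mul_nonneg (Nat.cast_nonneg i) (pow_nonneg hr0 i))
    have hval : r / (1 - r) ^ 2 = χ * ((n : ℝ) - χ) / ((n : ℝ) - 2 * χ) ^ 2 := by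
      have h1 : (n : ℝ) - 2 * χ ≠ 0 := by linarith
      have h2 : (n : ℝ) - χ ≠ 0 := by nlinarith
      have hrval : r = χ / ((n : ℝ) - χ) := by
        rw [hr, hp, hqdef]; field_simp
      have h1r : 1 - χ / ((n : ℝ) - χ) = ((n : ℝ) - 2 * χ) / ((n : ℝ) - χ) := by
        field_simp; ring
      rw [hrval, h1r]
      field_simp
    rw [← hval]
    exact mul_le_mul_of_nonneg_left hle (pow_nonneg hq0.le n)
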